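/- Let K be a field, m ≥ 1, n ≥ 0, d ≥ 2, p = M_{m,d-1}, and let R and I = I_{m,n,d} be as in the paper's construction. Then the graded maximal ideal m of R (generated by all m + pn variables) is an associated prime of R/I. -/

import Mathlib

open MvPolynomial

namespace MaxIdealAssocAux

lemma mem_span_range_X_iff {σ K : Type*} [CommSemiring K] {f : MvPolynomial σ K} :
    f ∈ Ideal.span (Set.range (X : σ → MvPolynomial σ K)) ↔ constantCoeff f = 0 := by
  rw [← Set.image_univ, mem_ideal_span_X_image]
  constructor
  · intro h
    by_contra hc
    have h0 : (0 : σ →₀ ℕ) ∈ f.support := by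
      rw [mem_support_iff]; exact hc
    obtain ⟨i, _, hi⟩ := h 0 h0
    simp at hi
  · intro h μ hμ
    have hne : μ ≠ 0 := by
      rintro rfl
      rw [mem_support_iff] at hμ
      exact hμ h
    obtain ⟨i, hi⟩ := Finsupp.ne_iff.mp hne
    exact ⟨i, Set.mem_univ i, by simpa using hi⟩

lemma prod_X_pow_eq {σ K α : Type*} [CommSemiring K] (s : Finset α) (g : α → σ) (f : α → ℕ) :
    (∏ a ∈ s, (X (g a) : MvPolynomial σ K) ^ f a)
      = monomial (∑ a ∈ s, Finsupp.single (g a) (f a)) 1 := by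
  classical
  induction s using Finset.induction_on with
  | empty => simp [monomial_zero']
  | insert _ _ h ih =>
    rw [Finset.prod_insert h, Finset.sum_insert h, ih, X_pow_eq_monomial, monomial_mul, one_mul]

lemma apply_le_sum {α : Type*} (e : α →₀ ℕ) (i : α) : e i ≤ e.sum fun _ k => k := by
  classical
  by_cases h : i ∈ e.support
  · exact Finset.single_le_sum (fun _ _ => Nat.zero_le _) h
  · simp [Finsupp.notMem_support_iff.mp h]

end MaxIdealAssocAux

open MaxIdealAssocAux in
open MvPolynomial in
/-- With `R` and `I = I_{m,n,d}` as in the paper's construction, the graded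
maximal ideal of `R` (generated by all `m + pn` variables) is an associated
prime of `R/I`. -/
theorem max_ideal_assoc_prime (K : Type*) [Field K] (m n d p : ℕ)
    (hm : 1 ≤ m) (hd : 2 ≤ d) (hp : p = Nat.choose (m + d - 2) (d - 1))
    (Z : Fin p → (Fin m →₀ ℕ)) (hZinj : Function.Injective Z)
    (hZdeg : ∀ j, ((Z j).sum fun _ k => k) = d - 1)
    (hZsurj : ∀ e : Fin m →₀ ℕ, (e.sum fun _ k => k) = d - 1 → ∃ j, Z j = e) :
    let R := MvPolynomial (Fin m ⊕ Fin p × Fin n) K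
    let Zpoly : Fin p → R := fun j => monomial (Finsupp.mapDomain Sum.inl (Z j)) 1
    let I : Ideal R := Ideal.span
      ((Set.range fun i : Fin m => (X (Sum.inl i) : R) ^ d) ∪
       (Set.range fun k : Fin n => ∑ j : Fin p, Zpoly j * X (Sum.inr (j, k))))
    IsAssociatedPrime (Ideal.span (Set.range (X : Fin m ⊕ Fin p × Fin n → R)))
      (R ⧸ I) := by
  intro R Zpoly I
  classical
  set σ := (Fin m ⊕ Fin p × Fin n)
  set P : Ideal R := Ideal.span (Set.range (X : σ → R)) with hP_def
  -- the witness
  set t : R := ∏ i : Fin m, (X (Sum.inl i) : R) ^ (d - 1) with ht_def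
  -- the exponent vector of t (in the X-variables)
  set c : Fin m →₀ ℕ := ∑ i : Fin m, Finsupp.single i (d - 1) with hc_def
  have hc_apply : ∀ i, c i = d - 1 := by
    intro i
    rw [hc_def, Finsupp.finset_sum_apply]
    rw [Finset.sum_eq_single i (fun b _ hb => Finsupp.single_eq_of_ne' hb)
      (fun h => absurd (Finset.mem_univ i) h)]
    simp
  have hc_map : Finsupp.mapDomain (Sum.inl : Fin m → σ) c
      = ∑ i : Fin m, Finsupp.single (Sum.inl i : σ) (d - 1) := by
    rw [hc_def, Finsupp.mapDomain_finset_sum]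
    exact Finset.sum_congr rfl fun i _ => Finsupp.mapDomain_single
  have ht_mono : t = monomial (Finsupp.mapDomain (Sum.inl : Fin m → σ) c) 1 := by
    rw [ht_def, prod_X_pow_eq, hc_map]
  -- total degree facts about the Z's
  have hZsum : ∀ j, ∑ i : Fin m, Z j i = d - 1 := by
    intro j
    rw [← hZdeg j]
    exact (Finsupp.sum_fintype (Z j) (fun _ k => k) (fun _ => rfl)).symm
  have hZle : ∀ j, Z j ≤ c := by
    intro j
    rw [Finsupp.le_def]
    intro i
    rw [hc_apply i, ← hZdeg j]
    exact apply_le_sum _ _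
  -- every variable multiplies t into I
  have hXinl : ∀ i : Fin m, (X (Sum.inl i) : R) * t ∈ I := by
    intro i
    have hgen : (X (Sum.inl i) : R) ^ d ∈ I :=
      Ideal.subset_span (Or.inl ⟨i, rfl⟩)
    have : (X (Sum.inl i) : R) * t
        = (X (Sum.inl i) : R) ^ d *
          ∏ i' ∈ Finset.univ.erase i, (X (Sum.inl i') : R) ^ (d - 1) := by
      rw [ht_def, ← Finset.mul_prod_erase Finset.univ _ (Finset.mem_univ i),
        ← mul_assoc, ← pow_succ']
      congr 2
      omega
    rw [this]
    exact Ideal.mul_mem_right _ _ hgen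
  have hXinr : ∀ (j : Fin p) (k : Fin n), (X (Sum.inr (j, k)) : R) * t ∈ I := by
    intro j k
    set W : R := monomial (Finsupp.mapDomain (Sum.inl : Fin m → σ) (c - Z j)) 1 with hW_def
    have hWZ : W * Zpoly j = t := by
      rw [hW_def, ht_mono, monomial_mul, one_mul, ← Finsupp.mapDomain_add,
        tsub_add_cancel_of_le (hZle j)]
    have hWZ' : ∀ j' : Fin p, j' ≠ j → W * Zpoly j' ∈ I := by
      intro j' hj'
      set w : Fin m →₀ ℕ := c - Z j + Z j' with hw_def
      -- some coordinate of w is ≥ d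
      have hex : ∃ i : Fin m, d ≤ w i := by
        by_contra hcon
        push_neg at hcon
        have hle : ∀ i, Z j' i ≤ Z j i := by
          intro i
          have h1 : Z j i ≤ c i := Finsupp.le_def.mp (hZle j) i
          have h2 := hcon i
          rw [hw_def] at h2
          simp only [Finsupp.coe_add, Finsupp.coe_tsub, Pi.add_apply, Pi.sub_apply] at h2
          have := hc_apply i
          omega
        have heq : Z j' = Z j := by
          ext i
          have hsum_eq : ∑ i : Fin m, Z j' i = ∑ i : Fin m, Z j i := by
            rw [hZsum, hZsum]
          exact (Finset.sum_eq_sum_iff_of_le (fun i _ => hle i)).mp hsum_eq i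
            (Finset.mem_univ i)
        exact hj' (hZinj heq)
      obtain ⟨i, hi⟩ := hex
      have hsingle : Finsupp.single (Sum.inl i : σ) d
          ≤ Finsupp.mapDomain (Sum.inl : Fin m → σ) w := by
        rw [Finsupp.single_le_iff, Finsupp.mapDomain_apply Sum.inl_injective]
        exact hi
      have hfac : W * Zpoly j'
          = (X (Sum.inl i) : R) ^ d *
            monomial (Finsupp.mapDomain (Sum.inl : Fin m → σ) w
              - Finsupp.single (Sum.inl i : σ) d) 1 := by
        rw [hW_def, monomial_mul, one_mul, ← Finsupp.mapDomain_add, ← hw_def,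
          X_pow_eq_monomial, monomial_mul, one_mul,
          add_tsub_cancel_of_le hsingle]
      rw [hfac]
      exact Ideal.mul_mem_right _ _ (Ideal.subset_span (Or.inl ⟨i, rfl⟩))
    have hF : (∑ j' : Fin p, Zpoly j' * X (Sum.inr (j', k)) : R) ∈ I :=
      Ideal.subset_span (Or.inr ⟨k, rfl⟩)
    have hsum : W * (∑ j' : Fin p, Zpoly j' * X (Sum.inr (j', k)))
        = X (Sum.inr (j, k)) * t
          + ∑ j' ∈ Finset.univ.erase j, (W * Zpoly j') * X (Sum.inr (j', k)) := by
      rw [Finset.mul_sum, ← Finset.add_sum_erase _ _ (Finset.mem_univ j),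
        ← mul_assoc, hWZ, mul_comm t]
      congr 1
      exact Finset.sum_congr rfl fun j' _ => (mul_assoc _ _ _).symm
    have hkey : X (Sum.inr (j, k)) * t
        = W * (∑ j' : Fin p, Zpoly j' * X (Sum.inr (j', k)))
          - ∑ j' ∈ Finset.univ.erase j, (W * Zpoly j') * X (Sum.inr (j', k)) := by
      rw [hsum]; ring
    rw [hkey]
    refine Ideal.sub_mem _ (Ideal.mul_mem_left _ _ hF) (Ideal.sum_mem _ fun j' hj' => ?_)
    exact Ideal.mul_mem_right _ _ (hWZ' j' (Finset.ne_of_mem_erase hj'))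
  -- P * t ⊆ I
  have hPt : ∀ r ∈ P, r * t ∈ I := by
    intro r hr
    refine Submodule.span_induction ?_ ?_ ?_ ?_ hr
    · rintro _ ⟨s, rfl⟩
      rcases s with i | ⟨j, k⟩
      · exact hXinl i
      · exact hXinr j k
    · simpa using I.zero_mem
    · intro a b _ _ ha hb
      rw [add_mul]
      exact Ideal.add_mem _ ha hb
    · intro a f _ hf
      rw [smul_eq_mul, mul_assoc]
      exact Ideal.mul_mem_left _ _ hf
  -- t ∉ I
  have htI : t ∉ I := by
    intro hmem
    set φ : R →ₐ[K] MvPolynomial (Fin m) K :=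
      aeval (Sum.elim X (fun _ => 0)) with hφ_def
    set J : Ideal (MvPolynomial (Fin m) K) :=
      Ideal.span (Set.range fun i : Fin m => (X i : MvPolynomial (Fin m) K) ^ d) with hJ_def
    have hle : I ≤ Ideal.comap φ J := by
      rw [Ideal.span_le]
      rintro _ (⟨i, rfl⟩ | ⟨k, rfl⟩)
      · rw [SetLike.mem_coe, Ideal.mem_comap, map_pow, hφ_def, aeval_X, Sum.elim_inl]
        exact Ideal.subset_span ⟨i, rfl⟩
      · rw [SetLike.mem_coe, Ideal.mem_comap, map_sum]
        have : ∀ j' : Fin p,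
            φ (Zpoly j' * X (Sum.inr (j', k))) = 0 := by
          intro j'
          rw [map_mul, hφ_def, aeval_X, Sum.elim_inr, mul_zero]
        rw [Finset.sum_congr rfl fun j' _ => this j', Finset.sum_const_zero]
        exact J.zero_mem
    have hφt : φ t = ∏ i : Fin m, (X i : MvPolynomial (Fin m) K) ^ (d - 1) := by
      rw [ht_def, map_prod]
      exact Finset.prod_congr rfl fun i _ => by
        rw [map_pow, hφ_def, aeval_X, Sum.elim_inl]
    have hmem' : (∏ i : Fin m, (X i : MvPolynomial (Fin m) K) ^ (d - 1)) ∈ J := by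
      rw [← hφt]
      exact (Ideal.mem_comap).mp (hle hmem)
    -- now derive a contradiction from monomial considerations
    have hJeq : (Set.range fun i : Fin m => (X i : MvPolynomial (Fin m) K) ^ d)
        = (fun s => monomial s (1 : K)) '' (Set.range fun i : Fin m => Finsupp.single i d) := by
      have heq : (fun i : Fin m => (X i : MvPolynomial (Fin m) K) ^ d)
          = (fun s => monomial s (1 : K)) ∘ (fun i => Finsupp.single i d) :=
        funext fun i => X_pow_eq_monomial
      rw [heq, Set.range_comp]
    rw [hJ_def, hJeq, mem_ideal_span_monomial_image] at hmem'
    have hprod : (∏ i : Fin m, (X i : MvPolynomial (Fin m) K) ^ (d - 1))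
        = monomial (∑ i : Fin m, Finsupp.single i (d - 1)) (1 : K) := by
      simpa using prod_X_pow_eq (Finset.univ : Finset (Fin m)) id (fun _ => d - 1)
    rw [hprod] at hmem'
    have hsupp : (∑ i : Fin m, Finsupp.single i (d - 1) : Fin m →₀ ℕ)
        ∈ (monomial (∑ i : Fin m, Finsupp.single i (d - 1)) (1 : K)).support := by
      rw [support_monomial, if_neg one_ne_zero]
      exact Finset.mem_singleton_self _
    obtain ⟨s, ⟨i, rfl⟩, hle'⟩ := hmem' _ hsupp
    have := Finsupp.single_le_iff.mp hle'
    rw [← hc_def] at this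
    rw [hc_apply i] at this
    omega
  -- prime
  have hPprime : P.IsPrime := by
    have hker : P = RingHom.ker (constantCoeff : R →+* K) := by
      ext f
      rw [RingHom.mem_ker, hP_def, mem_span_range_X_iff]
    rw [hker]
    exact RingHom.ker_isPrime _
  refine isAssociatedPrime_iff.mpr ⟨hPprime, Ideal.Quotient.mk I t, ?_⟩
  ext r
  rw [Submodule.mem_colon_singleton, Submodule.mem_bot]
  have hsmul : r • (Ideal.Quotient.mk I t) = Ideal.Quotient.mk I (r * t) := by
    rw [map_mul]
    rfl
  rw [hsmul, Ideal.Quotient.eq_zero_iff_mem]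
  constructor
  · exact hPt r
  · intro hrt
    rw [hP_def, mem_span_range_X_iff]
    by_contra hc0
    set a := constantCoeff r with ha_def
    have hr0 : r - C a ∈ P := by
      rw [hP_def, mem_span_range_X_iff, map_sub, constantCoeff_C, ← ha_def, sub_self]
    have h1 : (r - C a) * t ∈ I := hPt _ hr0
    have h2 : C a * t ∈ I := by
      have : C a * t = r * t - (r - C a) * t := by ring
      rw [this]
      exact Ideal.sub_mem _ hrt h1
    have h3 : t ∈ I := by
      have : t = C (a⁻¹) * (C a * t) := by
        rw [← mul_assoc, ← map_mul, inv_mul_cancel₀ hc0, map_one, one_mul]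
      rw [this]
      exact Ideal.mul_mem_left _ _ h2
    exact htI h3
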